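/- arXiv:2012.00134 — 2 statements merged into one kernel-verified Lean document; each statement's English description precedes it below -/
import Mathlib

section
/- Let K : H → H be adjointable, let (T_ω)_{ω∈Ω} be an integral K-operator frame for H whose best (optimal) lower and upper frame bounds are A and B, and let Q : H → H be an adjointable invertible operator with adjointable inverse satisfying Q⁻¹ K* = K* Q⁻¹. Then the best lower bound C and best upper bound D of the integral K-operator frame (T_ω ∘ Q)_{ω∈Ω} satisfy A·‖Q⁻¹‖⁻² ≤ C ≤ A·‖Q‖² and B·‖Q⁻¹‖⁻² ≤ D ≤ B·‖Q‖². -/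
open MeasureTheory

/-- The Hilbert C⋆-module class as it stood in the older Mathlib (right `A`-action via `Aᵐᵒᵖ`,
`⟪x, y <• a⟫ = ⟪x, y⟫ * a`); Mathlib's `CStarModule` has since changed convention. -/
class CStarModuleRightAct (A E : Type*) [NonUnitalSemiring A] [StarRing A]
    [Module ℂ A] [AddCommGroup E] [Module ℂ E] [PartialOrder A] [SMul Aᵐᵒᵖ E] [Norm A] [Norm E]
    extends Inner A E where
  inner_add_right {x} {y} {z} : inner x (y + z) = inner x y + inner x z
  inner_self_nonneg {x} : 0 ≤ inner x x
  inner_self {x} : inner x x = 0 ↔ x = 0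
  inner_op_smul_right {a : A} {x y : E} : inner x (MulOpposite.op a • y) = inner x y * a
  inner_smul_right_complex {z : ℂ} {x} {y} : inner x (z • y) = z • inner x y
  star_inner x y : star (inner x y) = inner y x
  norm_eq_sqrt_norm_inner_self x : ‖x‖ = Real.sqrt ‖inner x x‖

variable {A : Type*} [CStarAlgebra A] [PartialOrder A] [StarOrderedRing A]
variable {H : Type*} [NormedAddCommGroup H] [NormedSpace ℂ H] [SMul Aᵐᵒᵖ H] [CStarModuleRightAct A H]
variable {Ω : Type*} [MeasurableSpace Ω]

local notation "⟪" x ", " y "⟫" => inner (𝕜 := A) x y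

/-- `S` is an adjoint of `T` on the Hilbert `A`-module `H`:
`⟪T x, y⟫ = ⟪x, S y⟫` for all `x y`. -/
def IsAdjointOp (T S : H →L[ℂ] H) : Prop :=
  ∀ x y : H, ⟪T x, y⟫ = ⟪x, S y⟫

/-- `(T ω)` is an integral `K`-operator frame with bounds `a`, `b`, where `Ks`
denotes the adjoint `K*` of `K`. -/
def IsIntegralKOpFrameWith (μ : Measure Ω) (Ks : H →L[ℂ] H)
    (T : Ω → H →L[ℂ] H) (a b : ℝ) : Prop :=
  0 < a ∧ 0 < b ∧ ∀ x : H,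
    Integrable (fun ω => ⟪T ω x, T ω x⟫) μ ∧
    a • ⟪Ks x, Ks x⟫ ≤ ∫ ω, ⟪T ω x, T ω x⟫ ∂μ ∧
    ∫ ω, ⟪T ω x, T ω x⟫ ∂μ ≤ b • ⟪x, x⟫

/-- `(T ω)` is an integral operator frame with bounds `a`, `b`. -/
def IsIntegralOpFrameWith (μ : Measure Ω) (T : Ω → H →L[ℂ] H) (a b : ℝ) : Prop :=
  0 < a ∧ 0 < b ∧ ∀ x : H,
    Integrable (fun ω => ⟪T ω x, T ω x⟫) μ ∧
    a • ⟪x, x⟫ ≤ ∫ ω, ⟪T ω x, T ω x⟫ ∂μ ∧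
    ∫ ω, ⟪T ω x, T ω x⟫ ∂μ ≤ b • ⟪x, x⟫

namespace RA

lemma inner_self_nonneg {x : H} : 0 ≤ ⟪x, x⟫ := CStarModuleRightAct.inner_self_nonneg

lemma norm_sq_eq {x : H} : ‖x‖ ^ 2 = ‖⟪x, x⟫‖ := by
  rw [CStarModuleRightAct.norm_eq_sqrt_norm_inner_self (A := A) x, Real.sq_sqrt (norm_nonneg _)]

lemma inner_add_left {x y z : H} : ⟪x + y, z⟫ = ⟪x, z⟫ + ⟪y, z⟫ := by
  rw [← CStarModuleRightAct.star_inner z (x + y), CStarModuleRightAct.inner_add_right, star_add,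
    CStarModuleRightAct.star_inner, CStarModuleRightAct.star_inner]

lemma inner_sub_left {x y z : H} : ⟪x - y, z⟫ = ⟪x, z⟫ - ⟪y, z⟫ :=
  map_sub (AddMonoidHom.mk' (fun x : H => ⟪x, z⟫) (fun _ _ => inner_add_left)) x y

lemma inner_zero_left {z : H} : ⟪(0 : H), z⟫ = 0 :=
  map_zero (AddMonoidHom.mk' (fun x : H => ⟪x, z⟫) (fun _ _ => inner_add_left))

lemma inner_op_smul_right {a : A} {x y : H} : ⟪x, MulOpposite.op a • y⟫ = ⟪x, y⟫ * a :=
  CStarModuleRightAct.inner_op_smul_right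

lemma inner_op_smul_left {a : A} {x y : H} : ⟪MulOpposite.op a • x, y⟫ = star a * ⟪x, y⟫ := by
  rw [← CStarModuleRightAct.star_inner y, CStarModuleRightAct.inner_op_smul_right, star_mul,
    CStarModuleRightAct.star_inner]

end RA

private lemma inner_self_zero' {u : H} (h : ⟪u, u⟫ = 0) : u = 0 := by
  have := RA.norm_sq_eq (A := A) (x := u)
  rw [h] at this; simp at this; simpa using this

private lemma adj_op_smul' {Q Qs : H →L[ℂ] H} (hQ : IsAdjointOp (A := A) Q Qs) (x : H) (r : A) :
    Q (MulOpposite.op r • x) = MulOpposite.op r • (Q x) := by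
  have key : ∀ y : H, ⟪Q (MulOpposite.op r • x) - MulOpposite.op r • (Q x), y⟫ = 0 := by
    intro y
    rw [RA.inner_sub_left, hQ, RA.inner_op_smul_left,
      RA.inner_op_smul_left, hQ, sub_self]
  have h0 := inner_self_zero' (key (Q (MulOpposite.op r • x) - MulOpposite.op r • (Q x)))
  rwa [sub_eq_zero] at h0

private lemma inner_map_le' {Q Qs : H →L[ℂ] H} (hQ : IsAdjointOp (A := A) Q Qs) (x : H) :
    ⟪Q x, Q x⟫ ≤ (‖Q‖ ^ 2 : ℝ) • ⟪x, x⟫ := by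
  rcases subsingleton_or_nontrivial A with hA | hA
  · exact le_of_eq (Subsingleton.elim _ _)
  have ha : 0 ≤ ⟪x, x⟫ := RA.inner_self_nonneg
  have hsa : IsSelfAdjoint ⟪x, x⟫ := .of_nonneg ha
  set a := ⟪x, x⟫ with ha_def
  set p := ⟪Q x, Q x⟫ with hp_def
  have hp : 0 ≤ p := RA.inner_self_nonneg
  have main : ∀ δ : ℝ, 0 < δ → p ≤ (‖Q‖ ^ 2 : ℝ) • a + δ • (1 : A) := by
    intro δ hδ
    set ε := δ / (‖Q‖ ^ 2 + 1) with hε_def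
    have hQpos : (0:ℝ) < ‖Q‖ ^ 2 + 1 := by positivity
    have hε : 0 < ε := div_pos hδ hQpos
    set g : ℝ → ℝ := fun t => Real.sqrt (t + ε) with hg_def
    set f : ℝ → ℝ := fun t => (Real.sqrt (t + ε))⁻¹ with hf_def
    have hspec : ∀ t ∈ spectrum ℝ a, 0 < t + ε := fun t ht => by
      have := spectrum_nonneg_of_nonneg ha ht; linarith
    have hgc : ContinuousOn g (spectrum ℝ a) :=
      (Real.continuous_sqrt.comp (continuous_id.add continuous_const)).continuousOn
    have hfc : ContinuousOn f (spectrum ℝ a) :=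
      hgc.inv₀ fun t ht => ne_of_gt (Real.sqrt_pos.2 (hspec t ht))
    set e := cfc f a with he_def
    set d := cfc g a with hd_def
    have hse : IsSelfAdjoint e := cfc_predicate f a
    have hsd : IsSelfAdjoint d := cfc_predicate g a
    have hde : d * e = 1 := by
      rw [hd_def, he_def, ← cfc_mul g f a hgc hfc]
      calc cfc (fun t => g t * f t) a = cfc (fun _ : ℝ => (1:ℝ)) a :=
            cfc_congr fun t ht => mul_inv_cancel₀ (ne_of_gt (Real.sqrt_pos.2 (hspec t ht)))
        _ = 1 := cfc_const_one ℝ a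
    have hed : e * d = 1 := by
      rw [hd_def, he_def, ← cfc_mul f g a hfc hgc]
      calc cfc (fun t => f t * g t) a = cfc (fun _ : ℝ => (1:ℝ)) a :=
            cfc_congr fun t ht => inv_mul_cancel₀ (ne_of_gt (Real.sqrt_pos.2 (hspec t ht)))
        _ = 1 := cfc_const_one ℝ a
    have hcfc_b : cfc (fun t : ℝ => t + ε) a = a + ε • (1:A) := by
      rw [cfc_add (a := a) (fun t : ℝ => t) (fun _ => ε), cfc_id' ℝ a, cfc_const ε a,
        Algebra.algebraMap_eq_smul_one]
    have hdd : d * d = a + ε • (1:A) := by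
      rw [hd_def, ← cfc_mul g g a hgc hgc, ← hcfc_b]
      exact cfc_congr fun t ht => Real.mul_self_sqrt (hspec t ht).le
    have heae : e * (a + ε • (1:A)) * e = 1 := by
      rw [← hcfc_b, he_def, ← cfc_mul f _ a hfc (by fun_prop),
        ← cfc_mul (fun t => f t * (t + ε)) f a (hfc.mul (by fun_prop)) hfc]
      calc cfc (fun t => f t * (t + ε) * f t) a = cfc (fun _ : ℝ => (1:ℝ)) a := by
            refine cfc_congr fun t ht => ?_
            have h1 := hspec t ht
            have h2 : Real.sqrt (t + ε) ≠ 0 := ne_of_gt (Real.sqrt_pos.2 h1)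
            rw [hf_def]
            field_simp
            rw [Real.sq_sqrt h1.le]
        _ = 1 := cfc_const_one ℝ a
    have hy_inner : ⟪(MulOpposite.op e • x : H), MulOpposite.op e • x⟫ = e * a * e := by
      rw [RA.inner_op_smul_left, RA.inner_op_smul_right, hse.star_eq,
        ← ha_def, mul_assoc]
    have hy_le : ⟪(MulOpposite.op e • x : H), MulOpposite.op e • x⟫ ≤ 1 := by
      rw [hy_inner]
      calc e * a * e ≤ e * (a + ε • 1) * e := by
            have h3 : a ≤ a + ε • 1 := le_add_of_nonneg_right (smul_nonneg hε.le zero_le_one)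
            simpa [hse.star_eq] using star_left_conjugate_le_conjugate h3 e
        _ = 1 := heae
    have hy_norm : ‖(MulOpposite.op e • x : H)‖ ≤ 1 := by
      have h2 : ‖(MulOpposite.op e • x : H)‖ ^ 2 ≤ 1 := by
        rw [RA.norm_sq_eq (A := A)]
        calc ‖⟪(MulOpposite.op e • x : H), MulOpposite.op e • x⟫‖ ≤ ‖(1:A)‖ :=
              CStarAlgebra.norm_le_norm_of_nonneg_of_le (A := A) RA.inner_self_nonneg hy_le
          _ = 1 := norm_one
      nlinarith [norm_nonneg (MulOpposite.op e • x : H)]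
    have hQy : Q (MulOpposite.op e • x) = MulOpposite.op e • (Q x) := adj_op_smul' hQ x e
    have hq_inner : ⟪Q (MulOpposite.op e • x), Q (MulOpposite.op e • x)⟫ = e * p * e := by
      rw [hQy, RA.inner_op_smul_left, RA.inner_op_smul_right, hse.star_eq,
        ← hp_def, mul_assoc]
    have hq_norm : ‖⟪Q (MulOpposite.op e • x), Q (MulOpposite.op e • x)⟫‖ ≤ ‖Q‖ ^ 2 := by
      rw [← RA.norm_sq_eq]
      have h3 : ‖Q (MulOpposite.op e • x)‖ ≤ ‖Q‖ := by
        calc ‖Q (MulOpposite.op e • x)‖ ≤ ‖Q‖ * ‖(MulOpposite.op e • x : H)‖ :=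
              Q.le_opNorm _
          _ ≤ ‖Q‖ * 1 := mul_le_mul_of_nonneg_left hy_norm (norm_nonneg Q)
          _ = ‖Q‖ := mul_one _
      nlinarith [norm_nonneg (Q (MulOpposite.op e • x))]
    have hq_le : e * p * e ≤ (‖Q‖ ^ 2 : ℝ) • (1:A) := by
      rw [← hq_inner]
      calc ⟪Q (MulOpposite.op e • x), Q (MulOpposite.op e • x)⟫
          ≤ algebraMap ℝ A ‖⟪Q (MulOpposite.op e • x), Q (MulOpposite.op e • x)⟫‖ :=
            IsSelfAdjoint.le_algebraMap_norm_self (.of_nonneg RA.inner_self_nonneg)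
        _ ≤ (‖Q‖ ^ 2 : ℝ) • (1:A) := by
            rw [Algebra.algebraMap_eq_smul_one, ← sub_nonneg, ← sub_smul]
            exact smul_nonneg (by linarith) zero_le_one
    have final : p ≤ (‖Q‖ ^ 2 : ℝ) • (a + ε • 1) := by
      have hc := star_left_conjugate_le_conjugate hq_le d
      rw [hsd.star_eq] at hc
      have lhs_eq : d * (e * p * e) * d = p := by
        have h4 : d * (e * p * e) * d = (d * e) * p * (e * d) := by noncomm_ring
        rw [h4, hde, hed, one_mul, mul_one]
      have rhs_eq : d * ((‖Q‖ ^ 2 : ℝ) • (1:A)) * d = (‖Q‖ ^ 2 : ℝ) • (a + ε • 1) := by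
        rw [mul_smul_comm, smul_mul_assoc, mul_one, hdd]
      rwa [lhs_eq, rhs_eq] at hc
    calc p ≤ (‖Q‖ ^ 2 : ℝ) • (a + ε • 1) := final
      _ = (‖Q‖ ^ 2 : ℝ) • a + (‖Q‖ ^ 2 * ε) • (1:A) := by rw [smul_add, smul_smul]
      _ ≤ (‖Q‖ ^ 2 : ℝ) • a + δ • (1:A) := by
          have h6 : ε * (‖Q‖ ^ 2 + 1) = δ := div_mul_cancel₀ _ (ne_of_gt hQpos)
          have h5 : ‖Q‖ ^ 2 * ε ≤ δ := by nlinarith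
          refine add_le_add_right ?_ _
          rw [← sub_nonneg, ← sub_smul]
          exact smul_nonneg (by linarith) zero_le_one
  have hmem : ∀ n : ℕ, ((‖Q‖ ^ 2 : ℝ) • a - p + (1/(n+1) : ℝ) • (1:A)) ∈ {z : A | 0 ≤ z} := by
    intro n
    have := main (1/(n+1) : ℝ) (by positivity)
    simp only [Set.mem_setOf_eq]
    rw [← sub_nonneg] at *
    convert this using 1
    abel
  have h7 : Filter.Tendsto (fun n : ℕ => (1/(n+1) : ℝ)) Filter.atTop (nhds 0) :=
    tendsto_one_div_add_atTop_nhds_zero_nat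
  have hlim : Filter.Tendsto (fun n : ℕ => (‖Q‖ ^ 2 : ℝ) • a - p + (1/(n+1) : ℝ) • (1:A))
      Filter.atTop (nhds ((‖Q‖ ^ 2 : ℝ) • a - p)) := by
    have := (h7.smul_const (1:A)).const_add ((‖Q‖ ^ 2 : ℝ) • a - p)
    simpa using this
  have h8 : 0 ≤ (‖Q‖ ^ 2 : ℝ) • a - p :=
    CStarAlgebra.isClosed_nonneg.mem_of_tendsto hlim (Filter.Eventually.of_forall hmem)
  exact sub_nonneg.1 h8

/-- if `(T ω)` is an integral `K`-operator frame with best bounds `a`, `b`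
and `Q` is adjointable, invertible with adjointable inverse, and `Q⁻¹ K* = K* Q⁻¹`, then
the best bounds `C`, `D` of the integral `K`-operator frame `(T ω ∘ Q)` satisfy
`a * ‖Q⁻¹‖⁻² ≤ C ≤ a * ‖Q‖²` and `b * ‖Q⁻¹‖⁻² ≤ D ≤ b * ‖Q‖²`. -/
theorem bestBounds_integralKOpFrame_comp_invertible
    (μ : Measure Ω) (K Ks Q Qs Qinv Qinvs : H →L[ℂ] H)
    (hK : IsAdjointOp (A := A) K Ks) (hQ : IsAdjointOp (A := A) Q Qs)
    (hQinv : IsAdjointOp (A := A) Qinv Qinvs)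
    (hleft : Qinv.comp Q = ContinuousLinearMap.id ℂ H)
    (hright : Q.comp Qinv = ContinuousLinearMap.id ℂ H)
    (hcomm : Qinv.comp Ks = Ks.comp Qinv)
    (T : Ω → H →L[ℂ] H)
    (hframe : ∃ a b : ℝ, IsIntegralKOpFrameWith (A := A) μ Ks T a b)
    (a b C D : ℝ)
    (ha : a = sSup {c : ℝ | 0 < c ∧
      ∀ x : H, c • ⟪Ks x, Ks x⟫ ≤ ∫ ω, ⟪T ω x, T ω x⟫ ∂μ})
    (hb : b = sInf {c : ℝ | 0 < c ∧
      ∀ x : H, ∫ ω, ⟪T ω x, T ω x⟫ ∂μ ≤ c • ⟪x, x⟫})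
    (hC : C = sSup {c : ℝ | 0 < c ∧
      ∀ x : H, c • ⟪Ks x, Ks x⟫ ≤ ∫ ω, ⟪T ω (Q x), T ω (Q x)⟫ ∂μ})
    (hD : D = sInf {c : ℝ | 0 < c ∧
      ∀ x : H, ∫ ω, ⟪T ω (Q x), T ω (Q x)⟫ ∂μ ≤ c • ⟪x, x⟫}) :
    (a * (‖Qinv‖ ^ 2)⁻¹ ≤ C ∧ C ≤ a * ‖Q‖ ^ 2) ∧
      (b * (‖Qinv‖ ^ 2)⁻¹ ≤ D ∧ D ≤ b * ‖Q‖ ^ 2) := by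
  obtain ⟨a₀, b₀, ha₀pos, hb₀pos, hfr⟩ := hframe
  have hQQinv : ∀ z : H, Q (Qinv z) = z := fun z => by
    have := ContinuousLinearMap.ext_iff.mp hright z; simpa using this
  have hQinvQ : ∀ z : H, Qinv (Q z) = z := fun z => by
    have := ContinuousLinearMap.ext_iff.mp hleft z; simpa using this
  have hKsQ : ∀ z : H, Ks (Q z) = Q (Ks z) := by
    intro z
    have h1 : Qinv (Ks (Q z)) = Ks z := by
      have h2 := ContinuousLinearMap.ext_iff.mp hcomm (Q z)
      simp only [ContinuousLinearMap.comp_apply] at h2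
      rw [h2, hQinvQ]
    calc Ks (Q z) = Q (Qinv (Ks (Q z))) := (hQQinv _).symm
      _ = Q (Ks z) := by rw [h1]
  rcases subsingleton_or_nontrivial H with hH | hH
  · have hz : ∀ x : H, x = 0 := fun x => Subsingleton.elim x 0
    have hinner : ∀ x y : H, ⟪x, y⟫ = (0 : A) := fun x y => by
      rw [hz x]; exact RA.inner_zero_left
    have e1 : {c : ℝ | 0 < c ∧
        ∀ x : H, c • ⟪Ks x, Ks x⟫ ≤ ∫ ω, ⟪T ω x, T ω x⟫ ∂μ} = Set.Ioi 0 := by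
      ext c; simp [Set.mem_setOf_eq, Set.mem_Ioi, hinner]
    have e2 : {c : ℝ | 0 < c ∧
        ∀ x : H, ∫ ω, ⟪T ω x, T ω x⟫ ∂μ ≤ c • ⟪x, x⟫} = Set.Ioi 0 := by
      ext c; simp [Set.mem_setOf_eq, Set.mem_Ioi, hinner]
    have e3 : {c : ℝ | 0 < c ∧
        ∀ x : H, c • ⟪Ks x, Ks x⟫ ≤ ∫ ω, ⟪T ω (Q x), T ω (Q x)⟫ ∂μ} = Set.Ioi 0 := by
      ext c; simp [Set.mem_setOf_eq, Set.mem_Ioi, hinner]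
    have e4 : {c : ℝ | 0 < c ∧
        ∀ x : H, ∫ ω, ⟪T ω (Q x), T ω (Q x)⟫ ∂μ ≤ c • ⟪x, x⟫} = Set.Ioi 0 := by
      ext c; simp [Set.mem_setOf_eq, Set.mem_Ioi, hinner]
    have hsup : sSup (Set.Ioi (0:ℝ)) = 0 := by
      refine Real.sSup_of_not_bddAbove ?_
      rintro ⟨M, hM⟩
      have h0 : (0:ℝ) < max 1 (M+1) := lt_of_lt_of_le one_pos (le_max_left _ _)
      have h1 := hM (Set.mem_Ioi.mpr h0)
      have h2 := le_max_right 1 (M+1)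
      linarith
    have hinf : sInf (Set.Ioi (0:ℝ)) = 0 := csInf_Ioi
    rw [ha, hb, hC, hD, e1, e2, e3, e4, hsup, hinf]
    norm_num
  · obtain ⟨x₀, hx₀⟩ := exists_ne (0 : H)
    have hQne : Q ≠ 0 := by
      intro h; apply hx₀
      have := hQinvQ x₀
      rw [h] at this; simpa using this.symm
    have hQinvne : Qinv ≠ 0 := by
      intro h; apply hx₀
      have := hQQinv x₀
      rw [h] at this; simpa using this.symm
    have hQn : 0 < ‖Q‖ := norm_pos_iff.mpr hQne
    have hQin : 0 < ‖Qinv‖ := norm_pos_iff.mpr hQinvne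
    have hnq : (0:ℝ) < ‖Q‖ ^ 2 := by positivity
    have hni : (0:ℝ) < ‖Qinv‖ ^ 2 := by positivity
    set nq := ‖Q‖ ^ 2 with hnq_def
    set ni := ‖Qinv‖ ^ 2 with hni_def
    have kQ : ∀ z : H, ⟪Q z, Q z⟫ ≤ nq • ⟪z, z⟫ := fun z => inner_map_le' hQ z
    have kQi : ∀ z : H, ⟪Qinv z, Qinv z⟫ ≤ ni • ⟪z, z⟫ := fun z => inner_map_le' hQinv z
    have low1 : ∀ z : H, ⟪z, z⟫ ≤ ni • ⟪Q z, Q z⟫ := fun z => by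
      have := kQi (Q z); rwa [hQinvQ z] at this
    set S1 := {c : ℝ | 0 < c ∧
      ∀ x : H, c • ⟪Ks x, Ks x⟫ ≤ ∫ ω, ⟪T ω x, T ω x⟫ ∂μ} with hS1
    set S2 := {c : ℝ | 0 < c ∧
      ∀ x : H, ∫ ω, ⟪T ω x, T ω x⟫ ∂μ ≤ c • ⟪x, x⟫} with hS2
    set S3 := {c : ℝ | 0 < c ∧
      ∀ x : H, c • ⟪Ks x, Ks x⟫ ≤ ∫ ω, ⟪T ω (Q x), T ω (Q x)⟫ ∂μ} with hS3
    set S4 := {c : ℝ | 0 < c ∧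
      ∀ x : H, ∫ ω, ⟪T ω (Q x), T ω (Q x)⟫ ∂μ ≤ c • ⟪x, x⟫} with hS4
    have ha₀S1 : a₀ ∈ S1 := ⟨ha₀pos, fun x => (hfr x).2.1⟩
    have hb₀S2 : b₀ ∈ S2 := ⟨hb₀pos, fun x => (hfr x).2.2⟩
    have t13 : ∀ c ∈ S1, c / ni ∈ S3 := by
      rintro c ⟨hc, hcb⟩
      refine ⟨div_pos hc hni, fun x => ?_⟩
      calc (c/ni) • ⟪Ks x, Ks x⟫ ≤ (c/ni) • (ni • ⟪Q (Ks x), Q (Ks x)⟫) :=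
            smul_le_smul_of_nonneg_left (low1 (Ks x)) (by positivity)
        _ = c • ⟪Ks (Q x), Ks (Q x)⟫ := by
            rw [smul_smul, div_mul_cancel₀ _ (ne_of_gt hni), hKsQ]
        _ ≤ _ := hcb (Q x)
    have t31 : ∀ c ∈ S3, c / nq ∈ S1 := by
      rintro c ⟨hc, hcb⟩
      refine ⟨div_pos hc hnq, fun x => ?_⟩
      have hrw : Ks x = Q (Ks (Qinv x)) := by
        calc Ks x = Ks (Q (Qinv x)) := by rw [hQQinv]
          _ = Q (Ks (Qinv x)) := hKsQ _
      calc (c/nq) • ⟪Ks x, Ks x⟫ = (c/nq) • ⟪Q (Ks (Qinv x)), Q (Ks (Qinv x))⟫ := by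
            rw [← hrw]
        _ ≤ (c/nq) • (nq • ⟪Ks (Qinv x), Ks (Qinv x)⟫) :=
            smul_le_smul_of_nonneg_left (kQ _) (by positivity)
        _ = c • ⟪Ks (Qinv x), Ks (Qinv x)⟫ := by
            rw [smul_smul, div_mul_cancel₀ _ (ne_of_gt hnq)]
        _ ≤ ∫ ω, ⟪T ω (Q (Qinv x)), T ω (Q (Qinv x))⟫ ∂μ := hcb (Qinv x)
        _ = ∫ ω, ⟪T ω x, T ω x⟫ ∂μ := by rw [hQQinv]
    have t24 : ∀ c ∈ S2, c * nq ∈ S4 := by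
      rintro c ⟨hc, hcb⟩
      refine ⟨by positivity, fun x => ?_⟩
      calc ∫ ω, ⟪T ω (Q x), T ω (Q x)⟫ ∂μ ≤ c • ⟪Q x, Q x⟫ := hcb (Q x)
        _ ≤ c • (nq • ⟪x, x⟫) := smul_le_smul_of_nonneg_left (kQ x) hc.le
        _ = (c*nq) • ⟪x, x⟫ := by rw [smul_smul]
    have t42 : ∀ c ∈ S4, c * ni ∈ S2 := by
      rintro c ⟨hc, hcb⟩
      refine ⟨by positivity, fun x => ?_⟩
      calc ∫ ω, ⟪T ω x, T ω x⟫ ∂μ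
          = ∫ ω, ⟪T ω (Q (Qinv x)), T ω (Q (Qinv x))⟫ ∂μ := by rw [hQQinv]
        _ ≤ c • ⟪Qinv x, Qinv x⟫ := hcb (Qinv x)
        _ ≤ c • (ni • ⟪x, x⟫) := smul_le_smul_of_nonneg_left (kQi x) hc.le
        _ = (c*ni) • ⟪x, x⟫ := by rw [smul_smul]
    have hS1ne : S1.Nonempty := ⟨a₀, ha₀S1⟩
    have hS2ne : S2.Nonempty := ⟨b₀, hb₀S2⟩
    have hS3ne : S3.Nonempty := ⟨a₀ / ni, t13 a₀ ha₀S1⟩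
    have hS4ne : S4.Nonempty := ⟨b₀ * nq, t24 b₀ hb₀S2⟩
    have hbb2 : BddBelow S2 := ⟨0, fun c hc => hc.1.le⟩
    have hbb4 : BddBelow S4 := ⟨0, fun c hc => hc.1.le⟩
    have hDle : D ≤ b * nq := by
      rw [hD, hb]
      have h1 : ∀ c ∈ S2, sInf S4 ≤ c * nq := fun c hc => csInf_le hbb4 (t24 c hc)
      have h2 : sInf S4 / nq ≤ sInf S2 :=
        le_csInf hS2ne fun c hc => (div_le_iff₀ hnq).2 (h1 c hc)
      exact (div_le_iff₀ hnq).1 h2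
    have hDge : b * ni⁻¹ ≤ D := by
      rw [hD, hb]
      have h1 : ∀ c ∈ S4, sInf S2 ≤ c * ni := fun c hc => csInf_le hbb2 (t42 c hc)
      have h2 : sInf S2 / ni ≤ sInf S4 :=
        le_csInf hS4ne fun c hc => (div_le_iff₀ hni).2 (h1 c hc)
      calc sInf S2 * ni⁻¹ = sInf S2 / ni := (div_eq_mul_inv _ _).symm
        _ ≤ sInf S4 := h2
    refine ⟨?_, hDge, hDle⟩
    by_cases hbd1 : BddAbove S1
    · have hbd3 : BddAbove S3 := by
        obtain ⟨M, hM⟩ := hbd1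
        exact ⟨M * nq, fun c hc => (div_le_iff₀ hnq).1 (hM (t31 c hc))⟩
      constructor
      · rw [hC, ha]
        have h1 : ∀ c ∈ S1, c / ni ≤ sSup S3 := fun c hc => le_csSup hbd3 (t13 c hc)
        have h2 : sSup S1 ≤ sSup S3 * ni :=
          csSup_le hS1ne fun c hc => (div_le_iff₀ hni).1 (h1 c hc)
        calc sSup S1 * ni⁻¹ = sSup S1 / ni := (div_eq_mul_inv _ _).symm
          _ ≤ sSup S3 := (div_le_iff₀ hni).2 h2
      · rw [hC, ha]
        have h1 : ∀ c ∈ S3, c / nq ≤ sSup S1 := fun c hc => le_csSup hbd1 (t31 c hc)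
        exact csSup_le hS3ne fun c hc => (div_le_iff₀ hnq).1 (h1 c hc)
    · have hbd3 : ¬ BddAbove S3 := by
        rintro ⟨M, hM⟩
        exact hbd1 ⟨M * ni, fun c hc => (div_le_iff₀ hni).1 (hM (t13 c hc))⟩
      have haz : a = 0 := by rw [ha]; exact Real.sSup_of_not_bddAbove hbd1
      have hCz : C = 0 := by rw [hC]; exact Real.sSup_of_not_bddAbove hbd3
      rw [haz, hCz]
      norm_num
end

section
/- Let (T_ω)_{ω∈Ω} and (Γ_ω)_{ω∈Ω} be families of adjointable operators on H and let (a_ω)_{ω∈Ω}, (b_ω)_{ω∈Ω} be positively confined families of real numbers (0 < inf_ω a_ω ≤ sup_ω a_ω < ∞ and 0 < inf_ω b_ω ≤ sup_ω b_ω < ∞). Suppose there exist constants α, β with 0 ≤ α < 1/2 and 0 ≤ β < 1/2 such that for all x ∈ H, ∫_Ω ⟨a_ω T_ω x − b_ω Γ_ω x, a_ω T_ω x − b_ω Γ_ω x⟩ dμ(ω) ≤ α·∫_Ω ⟨a_ω T_ω x, a_ω T_ω x⟩ dμ(ω) + β·∫_Ω ⟨b_ω Γ_ω x, b_ω Γ_ω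 x⟩ dμ(ω). Then for all x ∈ H, ∫_Ω ⟨Γ_ω x, Γ_ω x⟩ dμ(ω) ≤ (2(1+α)·(sup_ω a_ω)² / ((1−2β)·(inf_ω b_ω)²)) · ∫_Ω ⟨T_ω x, T_ω x⟩ dμ(ω). -/
open MeasureTheory

variable {A : Type*} [CStarAlgebra A] [PartialOrder A] [StarOrderedRing A]
variable {H : Type*} [NormedAddCommGroup H] [NormedSpace ℂ H] [SMul A H] [CStarModule A H]
variable {Ω : Type*} [MeasurableSpace Ω]

local notation "⟪" x ", " y "⟫" => inner (𝕜 := A) x y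

lemma aux_integral_nonneg {μ : Measure Ω} {f : Ω → A} (hf : Integrable f μ)
    (h : ∀ ω, 0 ≤ f ω) : 0 ≤ ∫ ω, f ω ∂μ := by
  by_contra hcon
  have hC : IsClosed {a : A | 0 ≤ a} := CStarAlgebra.isClosed_nonneg
  have hconv : Convex ℝ {a : A | 0 ≤ a} := fun a ha b hb p q hp hq _ =>
    add_nonneg (smul_nonneg hp ha) (smul_nonneg hq hb)
  obtain ⟨φ, u, hu1, hu2⟩ := geometric_hahn_banach_point_closed hconv hC hcon
  have h0 : u < 0 := by simpa using hu2 0 (le_refl (0 : A))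
  have hφ : ∀ a : A, 0 ≤ a → 0 ≤ φ a := by
    clear hcon
    intro a ha
    by_contra hneg
    push_neg at hneg
    have ht : (0:ℝ) ≤ u / φ a + 1 := by
      have : 0 < u / φ a := div_pos_of_neg_of_neg h0 hneg
      linarith
    have h2 := hu2 ((u / φ a + 1) • a) (smul_nonneg ht ha)
    rw [φ.map_smul, smul_eq_mul] at h2
    have hne : φ a ≠ 0 := ne_of_lt hneg
    have he : (u / φ a + 1) * φ a = u + φ a := by field_simp
    rw [he] at h2
    linarith
  have hge : 0 ≤ φ (∫ ω, f ω ∂μ) := by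
    rw [← ContinuousLinearMap.integral_comp_comm φ hf]
    exact integral_nonneg fun ω => hφ _ (h ω)
  exact absurd hu1 (not_lt.mpr (le_trans h0.le hge))

lemma aux_integral_mono {μ : Measure Ω} {f g : Ω → A} (hf : Integrable f μ)
    (hg : Integrable g μ) (h : ∀ ω, f ω ≤ g ω) : ∫ ω, f ω ∂μ ≤ ∫ ω, g ω ∂μ := by
  rw [← sub_nonneg, ← integral_sub hg hf]
  exact aux_integral_nonneg (hg.sub hf) fun ω => sub_nonneg.2 (h ω)

lemma aux_smul_le {r s : ℝ} (h : r ≤ s) {a : A} (ha : 0 ≤ a) : r • a ≤ s • a := by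
  have : 0 ≤ (s - r) • a := smul_nonneg (sub_nonneg.2 h) ha
  rw [sub_smul s r a] at this
  exact sub_nonneg.mp this

lemma aux_inner_le (u v : H) : ⟪v, v⟫ ≤ (2:ℝ) • ⟪u - v, u - v⟫ + (2:ℝ) • ⟪u, u⟫ := by
  have key : (2:ℝ) • ⟪u - v, u - v⟫ + (2:ℝ) • ⟪u, u⟫ - ⟪v, v⟫
      = ⟪(2:ℝ) • u - v, (2:ℝ) • u - v⟫ := by
    simp only [CStarModule.inner_sub_left, CStarModule.inner_sub_right,
      CStarModule.inner_smul_left_real, CStarModule.inner_smul_right_real, smul_sub, smul_smul]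
    module
  have h0 : (0:A) ≤ ⟪(2:ℝ) • u - v, (2:ℝ) • u - v⟫ := CStarModule.inner_self_nonneg
  rw [← key] at h0
  exact sub_nonneg.mp h0

lemma aux_inner_smul_self (r : ℝ) (x : H) : ⟪r • x, r • x⟫ = (r ^ 2) • ⟪x, x⟫ := by
  rw [CStarModule.inner_smul_left_real, CStarModule.inner_smul_right_real, smul_smul, sq]

/-- under the perturbation condition with `0 ≤ α, β < 1/2` and positively
confined families `(c ω)`, `(d ω)`, one has
`∫ ⟪G ω x, G ω x⟫ ≤ (2(1+α)(sup c)² / ((1−2β)(inf d)²)) • ∫ ⟪T ω x, T ω x⟫`. -/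
theorem integral_inner_le_of_perturbation
    (μ : Measure Ω) (T G : Ω → H →L[ℂ] H)
    (c d : Ω → ℝ)
    (hc0 : 0 < ⨅ ω, c ω) (hcbdd : BddAbove (Set.range c))
    (hd0 : 0 < ⨅ ω, d ω) (hdbdd : BddAbove (Set.range d))
    (hTint : ∀ x : H, Integrable (fun ω => ⟪T ω x, T ω x⟫) μ)
    (hGint : ∀ x : H, Integrable (fun ω => ⟪G ω x, G ω x⟫) μ)
    (hint1 : ∀ x : H, Integrable
      (fun ω => ⟪c ω • T ω x - d ω • G ω x, c ω • T ω x - d ω • G ω x⟫) μ)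
    (hint2 : ∀ x : H, Integrable (fun ω => ⟪c ω • T ω x, c ω • T ω x⟫) μ)
    (hint3 : ∀ x : H, Integrable (fun ω => ⟪d ω • G ω x, d ω • G ω x⟫) μ)
    (α β : ℝ) (hα0 : 0 ≤ α) (hα : α < 1 / 2) (hβ0 : 0 ≤ β) (hβ : β < 1 / 2)
    (hper : ∀ x : H,
      ∫ ω, ⟪c ω • T ω x - d ω • G ω x, c ω • T ω x - d ω • G ω x⟫ ∂μ ≤
        α • ∫ ω, ⟪c ω • T ω x, c ω • T ω x⟫ ∂μ +
          β • ∫ ω, ⟪d ω • G ω x, d ω • G ω x⟫ ∂μ) :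
    ∀ x : H,
      ∫ ω, ⟪G ω x, G ω x⟫ ∂μ ≤
        (2 * (1 + α) * (⨆ ω, c ω) ^ 2 / ((1 - 2 * β) * (⨅ ω, d ω) ^ 2)) •
          ∫ ω, ⟪T ω x, T ω x⟫ ∂μ := by
  intro x
  -- nonemptiness and bounds
  have hne : Nonempty Ω := by
    by_contra h
    rw [not_nonempty_iff] at h
    rw [iInf_of_isEmpty, Real.sInf_empty] at hc0
    exact lt_irrefl 0 hc0
  have hcbb : BddBelow (Set.range c) := by
    by_contra h
    rw [Real.iInf_of_not_bddBelow h] at hc0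
    exact lt_irrefl 0 hc0
  have hdbb : BddBelow (Set.range d) := by
    by_contra h
    rw [Real.iInf_of_not_bddBelow h] at hd0
    exact lt_irrefl 0 hd0
  have hcle : ∀ ω, c ω ≤ ⨆ ω, c ω := fun ω => le_ciSup hcbdd ω
  have hcpos : ∀ ω, 0 < c ω := fun ω => lt_of_lt_of_le hc0 (ciInf_le hcbb ω)
  have hdle : ∀ ω, ⨅ ω, d ω ≤ d ω := fun ω => ciInf_le hdbb ω
  set m : ℝ := (⨆ ω, c ω) ^ 2 with hm
  set n : ℝ := (⨅ ω, d ω) ^ 2 with hn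
  have hmpos : 0 < m := pow_pos (lt_of_lt_of_le hc0 (le_trans (ciInf_le hcbb (Classical.arbitrary Ω)) (hcle _))) 2
  have hnpos : 0 < n := pow_pos hd0 2
  set u : Ω → H := fun ω => c ω • T ω x
  set v : Ω → H := fun ω => d ω • G ω x
  set IT := ∫ ω, ⟪T ω x, T ω x⟫ ∂μ
  set IG := ∫ ω, ⟪G ω x, G ω x⟫ ∂μ
  set IU := ∫ ω, ⟪u ω, u ω⟫ ∂μ
  set IV := ∫ ω, ⟪v ω, v ω⟫ ∂μ
  set ID := ∫ ω, ⟪u ω - v ω, u ω - v ω⟫ ∂μ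
  -- step A : IV ≤ 2•ID + 2•IU
  have hA : IV ≤ (2:ℝ) • ID + (2:ℝ) • IU := by
    have i1 : Integrable (fun ω => (2:ℝ) • ⟪u ω - v ω, u ω - v ω⟫) μ := (hint1 x).smul (2:ℝ)
    have i2 : Integrable (fun ω => (2:ℝ) • ⟪u ω, u ω⟫) μ := (hint2 x).smul (2:ℝ)
    have iadd : Integrable (fun ω => (2:ℝ) • ⟪u ω - v ω, u ω - v ω⟫ + (2:ℝ) • ⟪u ω, u ω⟫) μ :=
      i1.add i2
    have hmono := aux_integral_mono (hint3 x) iadd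
      (fun ω => aux_inner_le (u ω) (v ω))
    rwa [integral_add i1 i2, integral_smul, integral_smul] at hmono
  -- step B
  have hB : ID ≤ α • IU + β • IV := hper x
  -- combine: (1-2β)•IV ≤ (2*(1+α))•IU
  have hC : (1 - 2*β) • IV ≤ (2*(1+α)) • IU := by
    have h2 : (2:ℝ) • ID ≤ (2:ℝ) • (α • IU + β • IV) :=
      smul_le_smul_of_nonneg_left hB (by norm_num)
    have h3 : IV ≤ (2:ℝ) • (α • IU + β • IV) + (2:ℝ) • IU := le_trans hA (by
      exact add_le_add_left h2 _)
    have h4 := sub_nonneg.mpr h3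
    have key : (2:ℝ) • (α • IU + β • IV) + (2:ℝ) • IU - IV
        = (2*(1+α)) • IU - (1 - 2*β) • IV := by
      simp only [smul_add, smul_smul]
      module
    rw [key] at h4
    exact sub_nonneg.mp h4
  -- step C : IU ≤ m • IT
  have hIU : IU ≤ m • IT := by
    have i3 : Integrable (fun ω => m • ⟪T ω x, T ω x⟫) μ := (hTint x).smul m
    have hmono := aux_integral_mono (hint2 x) i3 (fun ω => by
      show ⟪u ω, u ω⟫ ≤ m • ⟪T ω x, T ω x⟫
      rw [show u ω = c ω • T ω x from rfl, aux_inner_smul_self]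
      exact aux_smul_le (pow_le_pow_left₀ (hcpos ω).le (hcle ω) 2)
        CStarModule.inner_self_nonneg)
    rwa [integral_smul] at hmono
  -- step D : n • IG ≤ IV
  have hIV : n • IG ≤ IV := by
    have i4 : Integrable (fun ω => n • ⟪G ω x, G ω x⟫) μ := (hGint x).smul n
    have hmono := aux_integral_mono i4 (hint3 x) (fun ω => by
      show n • ⟪G ω x, G ω x⟫ ≤ ⟪v ω, v ω⟫
      rw [show v ω = d ω • G ω x from rfl, aux_inner_smul_self]
      exact aux_smul_le (pow_le_pow_left₀ hd0.le (hdle ω) 2)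
        CStarModule.inner_self_nonneg)
    rwa [integral_smul] at hmono
  -- final chain
  have hk2 : (0:ℝ) < 1 - 2*β := by linarith
  have hk1 : (0:ℝ) ≤ 2*(1+α) := by linarith
  have h9 : ((1 - 2*β) * n) • IG ≤ ((2*(1+α)) * m) • IT := by
    calc ((1 - 2*β) * n) • IG = (1 - 2*β) • (n • IG) := by rw [smul_smul]
      _ ≤ (1 - 2*β) • IV := smul_le_smul_of_nonneg_left hIV hk2.le
      _ ≤ (2*(1+α)) • IU := hC
      _ ≤ (2*(1+α)) • (m • IT) := smul_le_smul_of_nonneg_left hIU hk1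
      _ = ((2*(1+α)) * m) • IT := by rw [smul_smul]
  have hpos : (0:ℝ) < (1 - 2*β) * n := mul_pos hk2 hnpos
  have h10 := smul_le_smul_of_nonneg_left h9 (le_of_lt (inv_pos.mpr hpos))
  rw [smul_smul, smul_smul, inv_mul_cancel₀ (ne_of_gt hpos), one_smul] at h10
  have : ((1 - 2*β) * n)⁻¹ * (2*(1+α) * m) = 2 * (1 + α) * m / ((1 - 2 * β) * n) := by
    field_simp
  rw [this] at h10
  exact h10
end
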